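/- arXiv:1212.3092 — 6 statements merged into one kernel-verified Lean document; each statement's English description precedes it below -/
import Mathlib

section
/- Let w(t)=∫₀^∞ e^{−st} f(s) ds with f non-negative and non-increasing, and suppose there exist δ∈(0,1) and a, s₀ > 0 such that w(λt) ≥ a λ^{−δ} w(t) for all λ ≤ 1 and t ≤ 1/s₀. Then there exists a constant c = c(w, a, s₀, δ) > 0 such that f(s) ≥ c s^{−1} w(s^{−1}) for all s ≥ s₀. -/
open MeasureTheory Set

/-- Lower bound for a non-increasing density from a scaling condition on its
Laplace transform at zero. -/
theorem density_lower_from_laplace_scaling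
    (f w : ℝ → ℝ) (a δ s₀ : ℝ)
    (ha : 0 < a) (hδ0 : 0 < δ) (hδ1 : δ < 1) (hs₀ : 0 < s₀)
    (hf0 : ∀ s > 0, 0 ≤ f s)
    (hfmono : ∀ s t : ℝ, 0 < s → s ≤ t → f t ≤ f s)
    (hint : ∀ t > 0, IntegrableOn (fun s => Real.exp (-(s * t)) * f s) (Set.Ioi 0))
    (hw : ∀ t > 0, w t = ∫ s in Set.Ioi (0:ℝ), Real.exp (-(s * t)) * f s)
    (hscal : ∀ lam t : ℝ, 0 < lam → lam ≤ 1 → 0 < t → t ≤ 1 / s₀ →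
      a * lam ^ (-δ) * w t ≤ w (lam * t)) :
    ∃ c > 0, ∀ s ≥ s₀, c * s⁻¹ * w s⁻¹ ≤ f s := by
  set K : ℝ := max 1 ((2 * Real.exp 1 / a) ^ (δ⁻¹)) with hKdef
  have hK1 : (1:ℝ) ≤ K := le_max_left _ _
  have hK0 : (0:ℝ) < K := lt_of_lt_of_le one_pos hK1
  have hbase : (0:ℝ) ≤ 2 * Real.exp 1 / a := by positivity
  have hKδ : 2 * Real.exp 1 / a ≤ K ^ δ := by
    have h1 : (2 * Real.exp 1 / a) ^ (δ⁻¹) ≤ K := le_max_right _ _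
    have h2 : ((2 * Real.exp 1 / a) ^ (δ⁻¹)) ^ δ ≤ K ^ δ :=
      Real.rpow_le_rpow (Real.rpow_nonneg hbase _) h1 hδ0.le
    rwa [← Real.rpow_mul hbase, inv_mul_cancel₀ hδ0.ne', Real.rpow_one] at h2
  have h2e : 2 * Real.exp 1 ≤ a * K ^ δ := by
    have := (div_le_iff₀ ha).mp hKδ
    linarith
  refine ⟨a * K ^ (δ - 1) / 2, by positivity, ?_⟩
  intro s hs
  have hs0 : 0 < s := lt_of_lt_of_le hs₀ hs
  set T : ℝ := K * s with hTdef
  have hT0 : 0 < T := by positivity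
  have htT : (0:ℝ) < T⁻¹ := by positivity
  have hts : (0:ℝ) < s⁻¹ := by positivity
  have hsle : s⁻¹ ≤ 1 / s₀ := by
    rw [one_div]
    exact inv_anti₀ hs₀ hs
  -- nonnegativity of w
  have hwnn : ∀ t : ℝ, 0 < t → 0 ≤ w t := by
    intro t ht
    rw [hw t ht]
    exact setIntegral_nonneg measurableSet_Ioi
      (fun u hu => mul_nonneg (Real.exp_pos _).le (hf0 u hu))
  -- scaling inequality
  have hscale : a * K ^ δ * w s⁻¹ ≤ w T⁻¹ := by
    have hKpow : (K⁻¹ : ℝ) ^ (-δ) = K ^ δ := by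
      rw [Real.inv_rpow hK0.le, Real.rpow_neg hK0.le, inv_inv]
    have h := hscal K⁻¹ s⁻¹ (by positivity) (inv_le_one_of_one_le₀ hK1) hts hsle
    rw [hKpow, ← mul_inv] at h
    exact h
  -- split the integral
  have hIT : IntegrableOn (fun u => Real.exp (-(u * T⁻¹)) * f u) (Ioi 0) := hint _ htT
  have hIs : IntegrableOn (fun u => Real.exp (-(u * s⁻¹)) * f u) (Ioi 0) := hint _ hts
  have hsplit : w T⁻¹ = (∫ u in Ioc 0 s, Real.exp (-(u * T⁻¹)) * f u)
      + ∫ u in Ioi s, Real.exp (-(u * T⁻¹)) * f u := by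
    rw [hw _ htT, ← Ioc_union_Ioi_eq_Ioi hs0.le,
      setIntegral_union (Ioc_disjoint_Ioi le_rfl) measurableSet_Ioi
        (hIT.mono_set Ioc_subset_Ioi_self) (hIT.mono_set (Ioi_subset_Ioi hs0.le))]
  -- head bound
  have hhead : (∫ u in Ioc 0 s, Real.exp (-(u * T⁻¹)) * f u) ≤ Real.exp 1 * w s⁻¹ := by
    have step1 : (∫ u in Ioc 0 s, Real.exp (-(u * T⁻¹)) * f u)
        ≤ ∫ u in Ioc 0 s, Real.exp 1 * (Real.exp (-(u * s⁻¹)) * f u) := by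
      refine setIntegral_mono_on (hIT.mono_set Ioc_subset_Ioi_self)
        ((hIs.mono_set Ioc_subset_Ioi_self).const_mul _) measurableSet_Ioc ?_
      intro u hu
      rw [← mul_assoc, ← Real.exp_add]
      refine mul_le_mul_of_nonneg_right ?_ (hf0 u hu.1)
      refine Real.exp_le_exp.mpr ?_
      have h1 : u * s⁻¹ ≤ 1 := by
        rw [← div_eq_mul_inv]
        exact div_le_one_of_le₀ hu.2 hs0.le
      have h2 : 0 ≤ u * T⁻¹ := mul_nonneg hu.1.le htT.le
      linarith
    have step2 : (∫ u in Ioc 0 s, Real.exp (-(u * s⁻¹)) * f u) ≤ w s⁻¹ := by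
      rw [hw _ hts]
      refine setIntegral_mono_set hIs ?_ (HasSubset.Subset.eventuallyLE Ioc_subset_Ioi_self)
      refine (ae_restrict_iff' measurableSet_Ioi).mpr (Filter.Eventually.of_forall ?_)
      exact fun u hu => mul_nonneg (Real.exp_pos _).le (hf0 u hu)
    calc (∫ u in Ioc 0 s, Real.exp (-(u * T⁻¹)) * f u)
        ≤ ∫ u in Ioc 0 s, Real.exp 1 * (Real.exp (-(u * s⁻¹)) * f u) := step1
      _ = Real.exp 1 * ∫ u in Ioc 0 s, Real.exp (-(u * s⁻¹)) * f u := by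
          rw [integral_const_mul]
      _ ≤ Real.exp 1 * w s⁻¹ := by
          exact mul_le_mul_of_nonneg_left step2 (Real.exp_pos _).le
  -- tail bound
  have htail : (∫ u in Ioi s, Real.exp (-(u * T⁻¹)) * f u) ≤ f s * T := by
    have hIexp : IntegrableOn (fun u => Real.exp (-(u * T⁻¹))) (Ioi s) := by
      have := exp_neg_integrableOn_Ioi s htT
      simpa [mul_comm] using this
    have h1 : (∫ u in Ioi s, Real.exp (-(u * T⁻¹)) * f u)
        ≤ ∫ u in Ioi s, Real.exp (-(u * T⁻¹)) * f s := by
      refine setIntegral_mono_on (hIT.mono_set (Ioi_subset_Ioi hs0.le))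
        (hIexp.mul_const _) measurableSet_Ioi ?_
      exact fun u hu => mul_le_mul_of_nonneg_left (hfmono s u hs0 (le_of_lt hu))
        (Real.exp_pos _).le
    have h2 : (∫ u in Ioi s, Real.exp (-(u * T⁻¹))) = T * Real.exp (-(s * T⁻¹)) := by
      rw [integral_comp_mul_right_Ioi (fun x => Real.exp (-x)) s htT,
        integral_exp_neg_Ioi, inv_inv, smul_eq_mul]
    have h3 : (∫ u in Ioi s, Real.exp (-(u * T⁻¹)) * f s)
        = T * Real.exp (-(s * T⁻¹)) * f s := by
      rw [integral_mul_const, h2]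
    have h4 : T * Real.exp (-(s * T⁻¹)) * f s ≤ T * f s := by
      have he : Real.exp (-(s * T⁻¹)) ≤ 1 :=
        Real.exp_le_one_iff.mpr (neg_nonpos.mpr (by positivity))
      exact mul_le_mul_of_nonneg_right (mul_le_of_le_one_right hT0.le he) (hf0 s hs0)
    calc (∫ u in Ioi s, Real.exp (-(u * T⁻¹)) * f u)
        ≤ T * Real.exp (-(s * T⁻¹)) * f s := by rw [← h3]; exact h1
      _ ≤ T * f s := h4
      _ = f s * T := mul_comm _ _
  -- combine: (1/2) w T⁻¹ ≤ f s * T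
  have hws : 0 ≤ w s⁻¹ := hwnn _ hts
  have hhalf : Real.exp 1 * w s⁻¹ ≤ w T⁻¹ / 2 := by
    nlinarith [hscale]
  have hmain : a * K ^ δ * w s⁻¹ ≤ 2 * (f s * T) := by
    have : w T⁻¹ ≤ Real.exp 1 * w s⁻¹ + f s * T := by
      rw [hsplit]; exact add_le_add hhead htail
    nlinarith [hscale, hhalf]
  -- conclude
  rw [Real.rpow_sub hK0, Real.rpow_one]
  have hrw : a * (K ^ δ / K) / 2 * s⁻¹ * w s⁻¹ = (a * K ^ δ * w s⁻¹) / (2 * (K * s)) := by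
    rw [eq_div_iff (by positivity : (2:ℝ) * (K * s) ≠ 0)]
    field_simp
  rw [hrw, div_le_iff₀ (by positivity)]
  calc a * K ^ δ * w s⁻¹ ≤ 2 * (f s * T) := hmain
    _ = f s * (2 * (K * s)) := by rw [hTdef]; ring
end

section
/- Let φ be a Bernstein function with φ(0+)=0 and no drift, with Lévy measure μ(t)dt, and suppose the tail u*(s) := μ(s,∞) satisfies c₁^{−1} φ(s^{−1}) ≤ u*(s) ≤ c₁ φ(s^{−1}) for all s ≥ 1 and some c₁ > 0, where φ satisfies a₃(R/r)^{δ₃} ≤ φ(R)/φ(r) for all r ≤ R ≤ 1 with δ₃∈(0,1), a₃>0. Then there exists c > 0 such that the Lévy density satisfies μ(t) ≥ c t^{−1} φ(t^{−1}) for all t ≥ 1. -/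
open MeasureTheory

/-- Lower bound for the Lévy density of a complete Bernstein function whose tail is
comparable to φ(1/s) for s ≥ 1, under the lower scaling condition of (H2). -/
theorem levy_density_lower_bound_at_infinity
    (φ μf : ℝ → ℝ) (c₁ a₃ δ₃ : ℝ)
    (hc₁ : 0 < c₁) (ha₃ : 0 < a₃) (hδ₃0 : 0 < δ₃) (hδ₃1 : δ₃ < 1)
    (hφpos : ∀ x > 0, 0 < φ x)
    (hμpos : ∀ t > 0, 0 < μf t)
    (hμmono : ∀ s t : ℝ, 0 < s → s ≤ t → μf t ≤ μf s)
    (hrep : ∀ lam > 0, φ lam = ∫ t in Set.Ioi (0:ℝ), (1 - Real.exp (-(lam * t))) * μf t)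
    (htail : ∀ s ≥ (1:ℝ),
      c₁⁻¹ * φ s⁻¹ ≤ (∫ t in Set.Ioi s, μf t) ∧ (∫ t in Set.Ioi s, μf t) ≤ c₁ * φ s⁻¹)
    (hH2 : ∀ r R : ℝ, 0 < r → r ≤ R → R ≤ 1 → a₃ * (R / r) ^ δ₃ ≤ φ R / φ r) :
    ∃ c > 0, ∀ t ≥ (1:ℝ), c * t⁻¹ * φ t⁻¹ ≤ μf t := by
  set K : ℝ := max 2 ((2 * c₁ ^ 2 / a₃) ^ (1 / δ₃)) with hKdef
  have hK2 : (2:ℝ) ≤ K := le_max_left _ _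
  have hK1 : (1:ℝ) < K := lt_of_lt_of_le one_lt_two hK2
  have hK1' : (0:ℝ) < K - 1 := sub_pos.mpr hK1
  have hK0 : (0:ℝ) < K := lt_trans one_pos hK1
  have hKpow : 2 * c₁ ^ 2 ≤ a₃ * K ^ δ₃ := by
    have hx : (0:ℝ) ≤ 2 * c₁ ^ 2 / a₃ := by positivity
    have h1 : (2 * c₁ ^ 2 / a₃) ^ (1 / δ₃) ≤ K := le_max_right _ _
    have h2 : ((2 * c₁ ^ 2 / a₃) ^ (1 / δ₃)) ^ δ₃ ≤ K ^ δ₃ :=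
      Real.rpow_le_rpow (Real.rpow_nonneg hx _) h1 hδ₃0.le
    rw [← Real.rpow_mul hx] at h2
    have : (1 / δ₃) * δ₃ = 1 := by field_simp
    rw [this, Real.rpow_one] at h2
    rw [div_le_iff₀ ha₃] at h2
    nlinarith
  refine ⟨(2 * c₁ * (K - 1))⁻¹, inv_pos.mpr (mul_pos (by positivity) hK1'), ?_⟩
  intro t ht
  have ht0 : (0:ℝ) < t := lt_of_lt_of_le one_pos ht
  have hKt1 : (1:ℝ) ≤ K * t := by nlinarith
  have htKt : t ≤ K * t := by nlinarith
  have hφt : (0:ℝ) < φ t⁻¹ := hφpos _ (by positivity)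
  have hφKt : (0:ℝ) < φ (K * t)⁻¹ := hφpos _ (by positivity)
  -- integrability
  have hint : ∀ s, (1:ℝ) ≤ s → IntegrableOn μf (Set.Ioi s) := by
    intro s hs
    by_contra h
    have h1 := (htail s hs).1
    rw [MeasureTheory.integral_undef h] at h1
    have h2 := hφpos s⁻¹ (by positivity)
    nlinarith [inv_pos.mpr hc₁]
  have hintt := hint t ht
  have hintKt := hint (K * t) hKt1
  have hIoc : IntegrableOn μf (Set.Ioc t (K * t)) :=
    hintt.mono_set Set.Ioc_subset_Ioi_self
  -- splitting
  have hsplit : (∫ x in Set.Ioi t, μf x)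
      = (∫ x in Set.Ioc t (K * t), μf x) + ∫ x in Set.Ioi (K * t), μf x := by
    rw [← MeasureTheory.setIntegral_union (Set.Ioc_disjoint_Ioi le_rfl)
      measurableSet_Ioi hIoc hintKt, Set.Ioc_union_Ioi_eq_Ioi htKt]
  -- bound on the middle piece
  have hbound : (∫ x in Set.Ioc t (K * t), μf x) ≤ (K - 1) * t * μf t := by
    have h1 : (∫ x in Set.Ioc t (K * t), μf x) ≤ ∫ _x in Set.Ioc t (K * t), μf t := by
      refine MeasureTheory.setIntegral_mono_on hIoc ?_ measurableSet_Ioc ?_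
      · exact integrableOn_const measure_Ioc_lt_top.ne
      · intro x hx
        exact hμmono t x ht0 hx.1.le
    have h2 : (∫ _x in Set.Ioc t (K * t), μf t) = (K - 1) * t * μf t := by
      rw [setIntegral_const, measureReal_def, Real.volume_Ioc, ENNReal.toReal_ofReal (by linarith),
        smul_eq_mul]
      ring
    linarith
  -- scaling estimate
  have hscale : c₁ * φ (K * t)⁻¹ ≤ φ t⁻¹ / (2 * c₁) := by
    have hr : (0:ℝ) < (K * t)⁻¹ := by positivity
    have hrR : (K * t)⁻¹ ≤ t⁻¹ := by
      apply inv_anti₀ ht0 htKt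
    have hR1 : t⁻¹ ≤ 1 := inv_le_one_of_one_le₀ ht
    have h := hH2 ((K * t)⁻¹) (t⁻¹) hr hrR hR1
    have hq : t⁻¹ / (K * t)⁻¹ = K := by
      field_simp
    rw [hq] at h
    rw [le_div_iff₀ hφKt] at h
    rw [le_div_iff₀ (by positivity : (0:ℝ) < 2 * c₁)]
    nlinarith [mul_nonneg (sub_nonneg.mpr hKpow) hφKt.le]
  -- combine
  have hlow := (htail t ht).1
  have hup := (htail (K * t) hKt1).2
  have hkey : φ t⁻¹ / (2 * c₁) ≤ (K - 1) * t * μf t := by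
    have heq : c₁⁻¹ * φ t⁻¹ - φ t⁻¹ / (2 * c₁) = φ t⁻¹ / (2 * c₁) := by
      ring
    linarith
  have hfin : φ t⁻¹ / (2 * c₁) / ((K - 1) * t) ≤ μf t := by
    rw [div_le_iff₀ (mul_pos hK1' ht0)]
    nlinarith
  have heq2 : (2 * c₁ * (K - 1))⁻¹ * t⁻¹ * φ t⁻¹ = φ t⁻¹ / (2 * c₁) / ((K - 1) * t) := by
    rw [div_div, div_eq_mul_inv, ← mul_inv, mul_comm]
    congr 2
    ring
  linarith [heq2 ▸ hfin]
end

section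
/- Let μ:(0,∞)→(0,∞) be non-increasing and satisfy μ(t) ≤ C t^{−1} φ(t^{−1}) for all t > 0, where φ:(0,∞)→(0,∞) is increasing and satisfies φ(v)/v ≤ φ(u)/u for 0<u≤v. Define j(r) = ∫₀^∞ (4πt)^{−d/2} e^{−r²/(4t)} μ(t) dt. Then there exists a constant c = c(d, C) > 0 such that j(r) ≤ c r^{−d} φ(r^{−2}) for all r > 0. -/
open MeasureTheory

private lemma rpow_merge_aux (d : ℕ) {t : ℝ} (ht : 0 < t) :
    t ^ (-(d:ℝ)/2) * t ^ (d+2) * t⁻¹ * t⁻¹ = t ^ ((d:ℝ)/2) := by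
  have h1 : (t:ℝ) ^ (d+2) = t ^ (((d:ℝ))+2) := by
    rw [← Real.rpow_natCast t (d+2)]; push_cast; ring_nf
  rw [h1, ← Real.rpow_neg_one t, ← Real.rpow_add ht, ← Real.rpow_add ht,
    ← Real.rpow_add ht]
  congr 1; ring

private lemma exp_neg_le_aux (n : ℕ) {x : ℝ} (hx : 0 < x) :
    Real.exp (-x) ≤ (n.factorial : ℝ) / x ^ n := by
  have h : x ^ n ≤ (n.factorial : ℝ) * Real.exp x := by
    have h0 := Real.pow_div_factorial_le_exp x hx.le n
    have hf : (0:ℝ) < (n.factorial : ℝ) := by positivity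
    calc x ^ n = (x ^ n / (n.factorial : ℝ)) * (n.factorial : ℝ) := by field_simp
      _ ≤ Real.exp x * (n.factorial : ℝ) := by gcongr
      _ = _ := by ring
  rw [le_div_iff₀ (pow_pos hx n)]
  calc Real.exp (-x) * x ^ n
      ≤ Real.exp (-x) * ((n.factorial : ℝ) * Real.exp x) := by
        have := (Real.exp_pos (-x)).le
        gcongr
    _ = (n.factorial : ℝ) * (Real.exp (-x) * Real.exp x) := by ring
    _ = (n.factorial : ℝ) := by rw [← Real.exp_add]; simp

/-- Upper bound for the jumping function of a subordinate Brownian motion. -/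
theorem jumping_function_upper_bound
    (d : ℕ) (hd : 1 ≤ d) (μf φ : ℝ → ℝ) (C : ℝ) (hC : 0 < C)
    (hφpos : ∀ x > 0, 0 < φ x)
    (hφmono : ∀ x y : ℝ, 0 < x → x ≤ y → φ x ≤ φ y)
    (hratio : ∀ u v : ℝ, 0 < u → u ≤ v → φ v / v ≤ φ u / u)
    (hμpos : ∀ t > 0, 0 < μf t)
    (hμmono : ∀ s t : ℝ, 0 < s → s ≤ t → μf t ≤ μf s)
    (hμub : ∀ t > 0, μf t ≤ C * t⁻¹ * φ t⁻¹) :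
    ∃ c > 0, ∀ r > 0,
      (∫⁻ t in Set.Ioi (0:ℝ),
        ENNReal.ofReal ((4 * Real.pi * t) ^ (-(d:ℝ)/2) * Real.exp (-(r^2 / (4*t))) * μf t))
      ≤ ENNReal.ofReal (c * r ^ (-(d:ℝ)) * φ ((r^2)⁻¹)) := by
  have hπ : (0:ℝ) < Real.pi := Real.pi_pos
  have hdR : (0:ℝ) < (d:ℝ) := by exact_mod_cast hd
  set P : ℝ := (4 * Real.pi) ^ (-(d:ℝ)/2) with hP
  have hPpos : 0 < P := Real.rpow_pos_of_pos (by positivity) _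
  set F : ℝ := ((d+2).factorial : ℝ) with hF
  have hFpos : 0 < F := by positivity
  set D : ℝ := (d:ℝ)/2 + 1 with hD
  have hDpos : 0 < D := by positivity
  refine ⟨C * P * (F * 4 ^ (d+2) / D + 2 / (d:ℝ)), by positivity, ?_⟩
  intro r hr
  have hr2 : (0:ℝ) < r ^ 2 := by positivity
  set s : ℝ := r ^ 2 with hs
  have hsinv : (0:ℝ) < s⁻¹ := by positivity
  have hφs : 0 < φ s⁻¹ := hφpos _ hsinv
  -- the two coefficients
  set K1 : ℝ := C * F * 4 ^ (d+2) * P * φ s⁻¹ / r ^ (2*d+2) with hK1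
  have hK1pos : 0 < K1 := by positivity
  set K2 : ℝ := C * P * φ s⁻¹ with hK2
  have hK2pos : 0 < K2 := by positivity
  -- split the integral
  have hsplit : Set.Ioi (0:ℝ) = Set.Ioc 0 s ∪ Set.Ioi s :=
    (Set.Ioc_union_Ioi_eq_Ioi hr2.le).symm
  rw [hsplit, lintegral_union measurableSet_Ioi Set.Ioc_disjoint_Ioi_same]
  -- pointwise bound on (0, s]
  have hpt1 : ∀ t ∈ Set.Ioc (0:ℝ) s,
      ENNReal.ofReal ((4 * Real.pi * t) ^ (-(d:ℝ)/2) * Real.exp (-(s / (4*t))) * μf t)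
        ≤ ENNReal.ofReal (K1 * t ^ ((d:ℝ)/2)) := by
    intro t ht
    obtain ⟨ht0, hts⟩ := ht
    apply ENNReal.ofReal_le_ofReal
    have hsplit4 : (4 * Real.pi * t) ^ (-(d:ℝ)/2) = P * t ^ (-(d:ℝ)/2) := by
      rw [hP, ← Real.mul_rpow (by positivity) ht0.le]
    have hexp : Real.exp (-(s / (4*t))) ≤ F * (4*t) ^ (d+2) / s ^ (d+2) := by
      have h := exp_neg_le_aux (d+2) (x := s/(4*t)) (by positivity)
      rw [div_pow, div_div_eq_mul_div, ← hF] at h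
      exact h
    have hμt : μf t ≤ C * t⁻¹ * (t⁻¹ * s * φ s⁻¹) := by
      have h1 := hμub t ht0
      have h2 : φ t⁻¹ ≤ t⁻¹ * s * φ s⁻¹ := by
        have h3 := hratio s⁻¹ t⁻¹ hsinv (by
          exact inv_anti₀ ht0 hts)
        rw [div_le_div_iff₀ (by positivity) hsinv] at h3
        calc φ t⁻¹ = (φ t⁻¹ * s⁻¹) * s := by field_simp
          _ ≤ (φ s⁻¹ * t⁻¹) * s := mul_le_mul_of_nonneg_right h3 hr2.le
          _ = t⁻¹ * s * φ s⁻¹ := by ring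
      calc μf t ≤ C * t⁻¹ * φ t⁻¹ := h1
        _ ≤ C * t⁻¹ * (t⁻¹ * s * φ s⁻¹) := by gcongr
    have hμtpos : 0 < μf t := hμpos t ht0
    calc (4 * Real.pi * t) ^ (-(d:ℝ)/2) * Real.exp (-(s / (4*t))) * μf t
        ≤ (P * t ^ (-(d:ℝ)/2)) * (F * (4*t) ^ (d+2) / s ^ (d+2))
            * (C * t⁻¹ * (t⁻¹ * s * φ s⁻¹)) := by
          rw [hsplit4]
          have h0 : 0 ≤ P * t ^ (-(d:ℝ)/2) := by positivity
          have hexp0 : 0 ≤ Real.exp (-(s / (4*t))) := (Real.exp_pos _).le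
          exact mul_le_mul (mul_le_mul le_rfl hexp hexp0 h0) hμt hμtpos.le (by positivity)
      _ = (C * F * 4 ^ (d+2) * P * φ s⁻¹) * (s / s ^ (d+2))
            * (t ^ (-(d:ℝ)/2) * t ^ (d+2) * t⁻¹ * t⁻¹) := by
          rw [mul_pow]; ring
      _ = K1 * t ^ ((d:ℝ)/2) := by
          rw [rpow_merge_aux d ht0, hK1]
          have : s / s ^ (d+2) = (r ^ (2*d+2))⁻¹ := by
            rw [hs, ← pow_mul, show 2*(d+2) = 2 + (2*d+2) by ring, pow_add]
            field_simp
          rw [this]; ring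
  -- pointwise bound on (s, ∞)
  have hpt2 : ∀ t ∈ Set.Ioi s,
      ENNReal.ofReal ((4 * Real.pi * t) ^ (-(d:ℝ)/2) * Real.exp (-(s / (4*t))) * μf t)
        ≤ ENNReal.ofReal (K2 * t ^ (-(d:ℝ)/2 - 1)) := by
    intro t ht
    have ht0 : (0:ℝ) < t := hr2.trans ht
    apply ENNReal.ofReal_le_ofReal
    have hsplit4 : (4 * Real.pi * t) ^ (-(d:ℝ)/2) = P * t ^ (-(d:ℝ)/2) := by
      rw [hP, ← Real.mul_rpow (by positivity) ht0.le]
    have hexp : Real.exp (-(s / (4*t))) ≤ 1 := by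
      rw [Real.exp_le_one_iff]
      have : 0 ≤ s / (4*t) := by positivity
      linarith
    have hμt : μf t ≤ C * t⁻¹ * φ s⁻¹ := by
      calc μf t ≤ C * t⁻¹ * φ t⁻¹ := hμub t ht0
        _ ≤ C * t⁻¹ * φ s⁻¹ := by
            gcongr
            exact hφmono t⁻¹ s⁻¹ (by positivity) (inv_anti₀ hr2 (le_of_lt ht))
    have hμtpos : 0 < μf t := hμpos t ht0
    calc (4 * Real.pi * t) ^ (-(d:ℝ)/2) * Real.exp (-(s / (4*t))) * μf t
        ≤ (P * t ^ (-(d:ℝ)/2)) * 1 * (C * t⁻¹ * φ s⁻¹) := by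
          rw [hsplit4]
          have h0 : 0 ≤ P * t ^ (-(d:ℝ)/2) := by positivity
          exact mul_le_mul (mul_le_mul le_rfl hexp (Real.exp_pos _).le h0) hμt
            hμtpos.le (by positivity)
      _ = K2 * (t ^ (-(d:ℝ)/2) * t⁻¹) := by rw [hK2]; ring
      _ = K2 * t ^ (-(d:ℝ)/2 - 1) := by
          rw [← Real.rpow_neg_one t, ← Real.rpow_add ht0, sub_eq_add_neg]
  -- bound the first piece
  have hexp_pow : -1 < (d:ℝ)/2 := by linarith
  have hint1 : IntegrableOn (fun t : ℝ => K1 * t ^ ((d:ℝ)/2)) (Set.Ioc 0 s) := by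
    apply Integrable.const_mul
    exact (intervalIntegrable_iff_integrableOn_Ioc_of_le hr2.le).mp
      (intervalIntegral.intervalIntegrable_rpow (Or.inl (by positivity)))
  have hval1 : ∫ t in Set.Ioc (0:ℝ) s, K1 * t ^ ((d:ℝ)/2) = K1 * (s ^ (D) / D) := by
    rw [MeasureTheory.integral_const_mul, ← intervalIntegral.integral_of_le hr2.le,
      integral_rpow (Or.inl hexp_pow)]
    rw [Real.zero_rpow (by positivity : ((d:ℝ)/2 + 1) ≠ 0)]
    rw [hD]; ring
  have hb1 : (∫⁻ t in Set.Ioc (0:ℝ) s,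
      ENNReal.ofReal ((4 * Real.pi * t) ^ (-(d:ℝ)/2) * Real.exp (-(s / (4*t))) * μf t))
      ≤ ENNReal.ofReal (K1 * (s ^ D / D)) := by
    calc _ ≤ ∫⁻ t in Set.Ioc (0:ℝ) s, ENNReal.ofReal (K1 * t ^ ((d:ℝ)/2)) := by
          apply setLIntegral_mono' measurableSet_Ioc hpt1
      _ = ENNReal.ofReal (∫ t in Set.Ioc (0:ℝ) s, K1 * t ^ ((d:ℝ)/2)) := by
          rw [ofReal_integral_eq_lintegral_ofReal hint1]
          filter_upwards [ae_restrict_mem measurableSet_Ioc] with t ht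
          have := ht.1
          positivity
      _ = ENNReal.ofReal (K1 * (s ^ D / D)) := by rw [hval1]
  -- bound the second piece
  have hq : (-(d:ℝ)/2 - 1) < -1 := by
    have : 0 < (d:ℝ)/2 := by positivity
    linarith
  have hint2 : IntegrableOn (fun t : ℝ => K2 * t ^ (-(d:ℝ)/2 - 1)) (Set.Ioi s) :=
    (integrableOn_Ioi_rpow_of_lt hq hr2).const_mul K2
  have hval2 : ∫ t in Set.Ioi s, K2 * t ^ (-(d:ℝ)/2 - 1)
      = K2 * (s ^ (-(d:ℝ)/2) * (2/(d:ℝ))) := by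
    rw [MeasureTheory.integral_const_mul, integral_Ioi_rpow_of_lt hq hr2]
    have : (-(d:ℝ)/2 - 1) + 1 = -(d:ℝ)/2 := by ring
    rw [this]
    field_simp
  have hb2 : (∫⁻ t in Set.Ioi s,
      ENNReal.ofReal ((4 * Real.pi * t) ^ (-(d:ℝ)/2) * Real.exp (-(s / (4*t))) * μf t))
      ≤ ENNReal.ofReal (K2 * (s ^ (-(d:ℝ)/2) * (2/(d:ℝ)))) := by
    calc _ ≤ ∫⁻ t in Set.Ioi s, ENNReal.ofReal (K2 * t ^ (-(d:ℝ)/2 - 1)) := by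
          apply setLIntegral_mono' measurableSet_Ioi hpt2
      _ = ENNReal.ofReal (∫ t in Set.Ioi s, K2 * t ^ (-(d:ℝ)/2 - 1)) := by
          rw [ofReal_integral_eq_lintegral_ofReal hint2]
          filter_upwards [ae_restrict_mem measurableSet_Ioi] with t ht
          have ht0 : (0:ℝ) < t := hr2.trans ht
          positivity
      _ = _ := by rw [hval2]
  -- powers of r
  have hrne : r ≠ 0 := hr.ne'
  have hsD : s ^ D = r ^ (d+2) := by
    rw [hs, hD, ← Real.rpow_natCast r 2, ← Real.rpow_mul hr.le,
      ← Real.rpow_natCast r (d+2)]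
    congr 1; push_cast; ring
  have hsneg : s ^ (-(d:ℝ)/2) = (r ^ d)⁻¹ := by
    rw [hs, ← Real.rpow_natCast r 2, ← Real.rpow_mul hr.le,
      ← Real.rpow_natCast r d, ← Real.rpow_neg hr.le]
    congr 1; push_cast; ring
  have hrd : r ^ (-(d:ℝ)) = (r ^ d)⁻¹ := by
    rw [Real.rpow_neg hr.le, Real.rpow_natCast]
  -- combine
  have hfinal : K1 * (s ^ D / D) + K2 * (s ^ (-(d:ℝ)/2) * (2/(d:ℝ)))
      = (C * P * (F * 4 ^ (d+2) / D + 2 / (d:ℝ))) * r ^ (-(d:ℝ)) * φ s⁻¹ := by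
    rw [hsD, hsneg, hrd, hK1, hK2]
    have hpow : r ^ (2*d+2) = r ^ d * r ^ (d + 2) := by
      rw [← pow_add]; congr 1; ring
    rw [hpow]
    have h1 : (r:ℝ) ^ d ≠ 0 := by positivity
    have h2 : (r:ℝ) ^ (d+2) ≠ 0 := by positivity
    field_simp
  calc _ ≤ ENNReal.ofReal (K1 * (s ^ D / D)) + ENNReal.ofReal (K2 * (s ^ (-(d:ℝ)/2) * (2/(d:ℝ)))) :=
        add_le_add hb1 hb2
    _ = ENNReal.ofReal (K1 * (s ^ D / D) + K2 * (s ^ (-(d:ℝ)/2) * (2/(d:ℝ)))) := by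
        rw [← ENNReal.ofReal_add (by positivity) (by positivity)]
    _ = _ := by rw [hfinal]
end

section
/- Let g:(0,∞)→(0,∞) be non-increasing and right continuous, r > 0, x₀ ∈ ℝ, M > 0, and h(s) := g(r + |s − x₀|) for s ∈ [0,M]. Then the non-increasing rearrangement h* of h satisfies h*(s) ≤ g(r + s/2) for all s ∈ [0,M]. -/
open MeasureTheory

/-- The non-increasing rearrangement of s ↦ g(r + |s − x₀|) on [0,M] is bounded by
g(r + s/2). -/
theorem rearrangement_bound
    (g : ℝ → ℝ) (r x₀ M : ℝ) (hr : 0 < r) (hM : 0 < M)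
    (hgpos : ∀ x > 0, 0 < g x)
    (hgmono : ∀ x y : ℝ, 0 < x → x ≤ y → g y ≤ g x)
    (hgrc : ∀ x > 0, ContinuousWithinAt g (Set.Ici x) x) :
    ∀ s ∈ Set.Icc (0:ℝ) M,
      (∫⁻ lam in Set.Ioi (0:ℝ),
        Set.indicator
          (Set.Iio ((volume {t ∈ Set.Icc (0:ℝ) M | lam < g (r + |t - x₀|)}).toReal))
          (fun _ => (1:ENNReal)) s)
      ≤ ENNReal.ofReal (g (r + s / 2)) := by
  intro s hs
  set c := g (r + s / 2) with hc_def
  have hs0 : 0 ≤ s := hs.1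
  have hrs : 0 < r + s / 2 := by linarith
  have hc : 0 < c := hgpos _ hrs
  have key : ∀ lam : ℝ, c ≤ lam →
      (volume {t ∈ Set.Icc (0:ℝ) M | lam < g (r + |t - x₀|)}).toReal ≤ s := by
    intro lam hlam
    have hsub : {t ∈ Set.Icc (0:ℝ) M | lam < g (r + |t - x₀|)} ⊆
        Set.Ioo (x₀ - s/2) (x₀ + s/2) := by
      intro t ht
      have h1 : |t - x₀| < s / 2 := by
        by_contra h
        push_neg at h
        have := hgmono (r + s/2) (r + |t - x₀|) hrs (by linarith)
        have := ht.2
        linarith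
      rw [abs_lt] at h1
      constructor <;> [linarith [h1.1]; linarith [h1.2]]
    have hmeas : volume {t ∈ Set.Icc (0:ℝ) M | lam < g (r + |t - x₀|)} ≤
        ENNReal.ofReal s := by
      calc volume {t ∈ Set.Icc (0:ℝ) M | lam < g (r + |t - x₀|)}
          ≤ volume (Set.Ioo (x₀ - s/2) (x₀ + s/2)) := measure_mono hsub
        _ = ENNReal.ofReal s := by rw [Real.volume_Ioo]; congr 1; ring
    exact ENNReal.toReal_le_of_le_ofReal hs0 hmeas
  calc (∫⁻ lam in Set.Ioi (0:ℝ),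
        Set.indicator
          (Set.Iio ((volume {t ∈ Set.Icc (0:ℝ) M | lam < g (r + |t - x₀|)}).toReal))
          (fun _ => (1:ENNReal)) s)
      ≤ ∫⁻ lam in Set.Ioi (0:ℝ),
          Set.indicator (Set.Iio c) (fun _ => (1:ENNReal)) lam := by
        apply lintegral_mono
        intro lam
        by_cases h : c ≤ lam
        · have : s ∉ Set.Iio ((volume {t ∈ Set.Icc (0:ℝ) M |
              lam < g (r + |t - x₀|)}).toReal) := by
            simp only [Set.mem_Iio, not_lt]
            exact key lam h
          simp only [Set.indicator_of_notMem this]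
          exact zero_le
        · push_neg at h
          simp only [Set.indicator_of_mem (Set.mem_Iio.mpr h)]
          exact Set.indicator_le' (fun _ _ => le_refl _) (fun _ _ => zero_le) s
    _ = ENNReal.ofReal c := by
        rw [lintegral_indicator measurableSet_Iio, setLIntegral_one,
          Measure.restrict_apply measurableSet_Iio]
        have : Set.Iio c ∩ Set.Ioi (0:ℝ) = Set.Ioo 0 c := by
          ext x; simp [Set.mem_Ioo, and_comm]
        rw [this, Real.volume_Ioo, sub_zero]
end

section
/- Suppose φ:(0,∞)→(0,∞) is increasing and satisfies a₅(R/r)^{δ} ≤ φ(R)/φ(r) ≤ a₆(R/r)^{δ'} for all 0<r<R<∞ with 0<δ≤δ'<1 and a₅,a₆>0. Then there exists c>0 depending only on a₅,a₆,δ,δ' such that for all λ > 0: λ² ∫₀^{1/λ} r φ(r^{−2}) dr + ∫_{1/λ}^∞ r^{−1} φ(r^{−2}) dr ≤ c φ(λ²). -/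
open MeasureTheory

lemma ies_rpow_inv_sq {x : ℝ} (hx : 0 < x) (s : ℝ) : ((x^2)⁻¹) ^ s = x ^ (-(2*s)) := by
  rw [show -(2*s) = (-2)*s by ring, Real.rpow_mul hx.le, Real.rpow_neg hx.le,
    Real.rpow_two]

lemma ies_rpow_sq {x : ℝ} (hx : 0 < x) (s : ℝ) : ((x^2):ℝ) ^ s = x ^ (2*s) := by
  rw [← Real.rpow_two, ← Real.rpow_mul hx.le]

lemma ies_rpow_one_div {x : ℝ} (hx : 0 < x) (s : ℝ) : ((1:ℝ)/x) ^ s = x ^ (-s) := by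
  rw [one_div, ← Real.rpow_neg_one x, ← Real.rpow_mul hx.le, neg_one_mul]

/-- Karamata-type integral estimate (2.11). -/
theorem integral_estimate_phi
    (φ : ℝ → ℝ) (a₅ a₆ δ δ' : ℝ)
    (ha₅ : 0 < a₅) (ha₆ : 0 < a₆) (hδ0 : 0 < δ) (hδδ' : δ ≤ δ') (hδ'1 : δ' < 1)
    (hφpos : ∀ x > 0, 0 < φ x)
    (hφmono : ∀ x y : ℝ, 0 < x → x ≤ y → φ x ≤ φ y)
    (hscal : ∀ r R : ℝ, 0 < r → r < R →
      a₅ * (R / r) ^ δ ≤ φ R / φ r ∧ φ R / φ r ≤ a₆ * (R / r) ^ δ') :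
    ∃ c > 0, ∀ lam > 0,
      lam ^ 2 * (∫ r in Set.Ioc (0:ℝ) (1 / lam), r * φ ((r ^ 2)⁻¹))
        + (∫ r in Set.Ioi (1 / lam), r⁻¹ * φ ((r ^ 2)⁻¹))
      ≤ c * φ (lam ^ 2) := by
  have h2δ' : (0:ℝ) < 2 - 2 * δ' := by linarith
  have hδ'0 : 0 < δ' := lt_of_lt_of_le hδ0 hδδ'
  refine ⟨a₆ / (2 - 2*δ') + 1 / (2*δ*a₅),
    add_pos (div_pos ha₆ h2δ') (div_pos one_pos (by positivity)), ?_⟩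
  intro lam hlam
  have hL : (0:ℝ) < lam ^ 2 := by positivity
  have hφL : 0 < φ (lam ^ 2) := hφpos _ hL
  have ha : (0:ℝ) < 1 / lam := by positivity
  -- the two constants
  set C₁ : ℝ := a₆ * φ (lam^2) * (lam^2) ^ (-δ') with hC₁
  set C₂ : ℝ := a₅⁻¹ * φ (lam^2) * (lam^2) ^ (-δ) with hC₂
  have hC₁pos : 0 < C₁ := by positivity
  have hC₂pos : 0 < C₂ := by positivity
  -- basic inequalities
  have hkey1 : ∀ r : ℝ, 0 < r → r < 1/lam → lam ^ 2 ≤ 1 / r^2 := by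
    intro r hr0 hr1
    have h1 : r * lam < 1 := (lt_div_iff₀ hlam).1 hr1
    exact le_of_lt ((lt_div_iff₀ (by positivity)).2 (by nlinarith [mul_pos hr0 hlam]))
  have hkey1' : ∀ r : ℝ, 0 < r → r < 1/lam → lam ^ 2 < (r^2)⁻¹ := by
    intro r hr0 hr1
    have h1 : r * lam < 1 := (lt_div_iff₀ hlam).1 hr1
    have : lam^2 < 1/(r^2) := (lt_div_iff₀ (by positivity)).2 (by nlinarith [mul_pos hr0 hlam])
    simpa [one_div] using this
  ------------------------------------------------------------------ Part 1
  -- pointwise bound on Ioo 0 (1/lam)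
  have hpt1 : ∀ r ∈ Set.Ioo (0:ℝ) (1/lam), r * φ ((r^2)⁻¹) ≤ C₁ * r ^ (1 - 2*δ') := by
    rintro r ⟨hr0, hr1⟩
    have hrr : lam ^ 2 < (r^2)⁻¹ := hkey1' r hr0 hr1
    have hsc := (hscal (lam^2) ((r^2)⁻¹) hL hrr).2
    have hφr : φ ((r^2)⁻¹) ≤ a₆ * ((r^2)⁻¹ / lam^2) ^ δ' * φ (lam^2) := by
      have := (div_le_iff₀ hφL).1 hsc
      linarith
    have hratio : ((r^2)⁻¹ / lam^2) ^ δ' = r ^ (-(2*δ')) * (lam^2) ^ (-δ') := by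
      rw [Real.div_rpow (by positivity) hL.le, Real.rpow_neg hL.le, div_eq_mul_inv,
        ies_rpow_inv_sq hr0]
    have hrmul : r * r ^ (-(2*δ')) = r ^ (1 - 2*δ') := by
      rw [show (1 - 2*δ') = 1 + -(2*δ') by ring, Real.rpow_add hr0, Real.rpow_one]
    calc r * φ ((r^2)⁻¹) ≤ r * (a₆ * ((r^2)⁻¹ / lam^2) ^ δ' * φ (lam^2)) := by
          exact mul_le_mul_of_nonneg_left hφr hr0.le
      _ = C₁ * r ^ (1 - 2*δ') := by
          rw [hratio, hC₁, ← hrmul]; ring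
  -- measurability: a globally monotone modification of φ
  have hgmono : Monotone (fun x : ℝ => φ (max x (lam^2))) := by
    intro x y hxy
    exact hφmono _ _ (lt_of_lt_of_le hL (le_max_right _ _)) (max_le_max hxy le_rfl)
  have hgpos : ∀ x : ℝ, 0 < φ (max x (lam^2)) :=
    fun x => hφpos _ (lt_of_lt_of_le hL (le_max_right _ _))
  have hF1meas : Measurable (fun r : ℝ => r * φ (max ((r^2)⁻¹) (lam^2))) :=
    measurable_id.mul (hgmono.measurable.comp ((measurable_id.pow_const 2).inv))
  -- integrability of majorant
  have hM1int : IntegrableOn (fun r : ℝ => C₁ * r ^ (1 - 2*δ')) (Set.Ioo (0:ℝ) (1/lam)) := by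
    have h0 : IntegrableOn (fun r : ℝ => r ^ (1 - 2*δ')) (Set.Ioc (0:ℝ) (1/lam)) := by
      rw [← intervalIntegrable_iff_integrableOn_Ioc_of_le ha.le]
      exact intervalIntegral.intervalIntegrable_rpow' (by linarith)
    exact ((h0.mono_set Set.Ioo_subset_Ioc_self).const_mul C₁)
  -- integrability of the integrand
  have hF1int : IntegrableOn (fun r : ℝ => r * φ (max ((r^2)⁻¹) (lam^2)))
      (Set.Ioo (0:ℝ) (1/lam)) := by
    refine Integrable.mono' hM1int (hF1meas.aestronglyMeasurable.restrict) ?_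
    refine (ae_restrict_iff' measurableSet_Ioo).2 (Filter.Eventually.of_forall ?_)
    rintro r ⟨hr0, hr1⟩
    have hmax : max ((r^2)⁻¹) (lam^2) = (r^2)⁻¹ := max_eq_left (hkey1' r hr0 hr1).le
    rw [Real.norm_eq_abs, abs_of_nonneg (mul_nonneg hr0.le (hgpos ((r^2)⁻¹)).le), hmax]
    exact hpt1 r ⟨hr0, hr1⟩
  have hEq1 : Set.EqOn (fun r : ℝ => r * φ (max ((r^2)⁻¹) (lam^2)))
      (fun r : ℝ => r * φ ((r^2)⁻¹)) (Set.Ioo (0:ℝ) (1/lam)) := by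
    rintro r ⟨hr0, hr1⟩
    simp only [max_eq_left (hkey1' r hr0 hr1).le]
  have hf1int : IntegrableOn (fun r : ℝ => r * φ ((r^2)⁻¹)) (Set.Ioo (0:ℝ) (1/lam)) :=
    hF1int.congr_fun hEq1 measurableSet_Ioo
  -- value of the majorant integral
  have hM1val : ∫ r in Set.Ioo (0:ℝ) (1/lam), C₁ * r ^ (1 - 2*δ')
      = C₁ * ((1/lam) ^ (2 - 2*δ') / (2 - 2*δ')) := by
    rw [integral_const_mul, ← integral_Ioc_eq_integral_Ioo,
      ← intervalIntegral.integral_of_le ha.le, integral_rpow (Or.inl (by linarith)),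
      Real.zero_rpow (by linarith), sub_zero,
      show (1 - 2*δ' + 1) = 2 - 2*δ' by ring, one_div]
  have hI1 : ∫ r in Set.Ioc (0:ℝ) (1/lam), r * φ ((r^2)⁻¹)
      ≤ C₁ * ((1/lam) ^ (2 - 2*δ') / (2 - 2*δ')) := by
    rw [integral_Ioc_eq_integral_Ioo, ← hM1val]
    exact setIntegral_mono_on hf1int hM1int measurableSet_Ioo hpt1
  ------------------------------------------------------------------ Part 2
  have hkey2 : ∀ r : ℝ, 1/lam < r → (r^2)⁻¹ < lam ^ 2 := by
    intro r hr
    have hr0 : 0 < r := lt_trans ha hr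
    have h1 : 1 < r * lam := (div_lt_iff₀ hlam).1 hr
    have : 1/(r^2) < lam^2 := (div_lt_iff₀ (by positivity)).2 (by nlinarith [mul_pos hr0 hlam])
    simpa [one_div] using this
  have hpt2 : ∀ r ∈ Set.Ioi (1/lam), r⁻¹ * φ ((r^2)⁻¹) ≤ C₂ * r ^ (-1 - 2*δ) := by
    intro r hr
    have hr0 : 0 < r := lt_trans ha hr
    have hrr : (r^2)⁻¹ < lam ^ 2 := hkey2 r hr
    have hrr0 : (0:ℝ) < (r^2)⁻¹ := by positivity
    have hsc := (hscal ((r^2)⁻¹) (lam^2) hrr0 hrr).1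
    have hφr : φ ((r^2)⁻¹) ≤ φ (lam^2) * (a₅ * (lam^2 / (r^2)⁻¹) ^ δ)⁻¹ := by
      have hφrpos : 0 < φ ((r^2)⁻¹) := hφpos _ hrr0
      have hppos : 0 < a₅ * (lam^2 / (r^2)⁻¹) ^ δ := by positivity
      rw [le_div_iff₀ hφrpos] at hsc
      rw [← div_eq_mul_inv, le_div_iff₀ hppos, mul_comm]
      exact hsc
    have hratio : ((lam^2 / (r^2)⁻¹) ^ δ)⁻¹ = (lam^2) ^ (-δ) * r ^ (-(2*δ)) := by
      rw [div_eq_mul_inv, inv_inv, Real.mul_rpow hL.le (sq_nonneg r), mul_inv,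
        ← Real.rpow_neg hL.le, ← Real.rpow_neg (sq_nonneg r), ies_rpow_sq hr0,
        show (2 * -δ) = -(2*δ) by ring]
    have hrmul : r⁻¹ * r ^ (-(2*δ)) = r ^ (-1 - 2*δ) := by
      rw [show (-1 - 2*δ) = -1 + -(2*δ) by ring, Real.rpow_add hr0, Real.rpow_neg_one]
    calc r⁻¹ * φ ((r^2)⁻¹) ≤ r⁻¹ * (φ (lam^2) * (a₅ * (lam^2 / (r^2)⁻¹) ^ δ)⁻¹) :=
          mul_le_mul_of_nonneg_left hφr (by positivity)
      _ = C₂ * r ^ (-1 - 2*δ) := by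
          rw [mul_inv, hratio, hC₂, ← hrmul]; ring
  -- measurability via a globally antitone modification
  have hGanti : Antitone (fun r : ℝ => φ (((max r (1/lam))^2)⁻¹)) := by
    intro x y hxy
    have hx : 0 < max x (1/lam) := lt_of_lt_of_le ha (le_max_right _ _)
    have hy : 0 < max y (1/lam) := lt_of_lt_of_le ha (le_max_right _ _)
    apply hφmono _ _ (by positivity)
    have hsq : (max x (1/lam))^2 ≤ (max y (1/lam))^2 := by
      nlinarith [max_le_max hxy (le_refl (1/lam))]
    exact inv_anti₀ (by positivity) hsq
  have hF2meas : Measurable (fun r : ℝ => r⁻¹ * φ (((max r (1/lam))^2)⁻¹)) :=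
    measurable_id.inv.mul hGanti.measurable
  have hM2int : IntegrableOn (fun r : ℝ => C₂ * r ^ (-1 - 2*δ)) (Set.Ioi (1/lam)) :=
    (integrableOn_Ioi_rpow_of_lt (by linarith) ha).const_mul C₂
  have hF2int : IntegrableOn (fun r : ℝ => r⁻¹ * φ (((max r (1/lam))^2)⁻¹))
      (Set.Ioi (1/lam)) := by
    refine Integrable.mono' hM2int (hF2meas.aestronglyMeasurable.restrict) ?_
    refine (ae_restrict_iff' measurableSet_Ioi).2 (Filter.Eventually.of_forall ?_)
    intro r hr
    have hr0 : 0 < r := lt_trans ha hr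
    have hmax : max r (1/lam) = r := max_eq_left (le_of_lt hr)
    rw [Real.norm_eq_abs, hmax,
      abs_of_nonneg (mul_nonneg (by positivity) (hφpos _ (by positivity)).le)]
    exact hpt2 r hr
  have hEq2 : Set.EqOn (fun r : ℝ => r⁻¹ * φ (((max r (1/lam))^2)⁻¹))
      (fun r : ℝ => r⁻¹ * φ ((r^2)⁻¹)) (Set.Ioi (1/lam)) := by
    intro r hr
    simp only [max_eq_left (le_of_lt (Set.mem_Ioi.mp hr))]
  have hf2int : IntegrableOn (fun r : ℝ => r⁻¹ * φ ((r^2)⁻¹)) (Set.Ioi (1/lam)) :=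
    hF2int.congr_fun hEq2 measurableSet_Ioi
  have hM2val : ∫ r in Set.Ioi (1/lam), C₂ * r ^ (-1 - 2*δ)
      = C₂ * ((1/lam) ^ (-(2*δ)) / (2*δ)) := by
    rw [integral_const_mul, integral_Ioi_rpow_of_lt (by linarith) ha,
      show (-1 - 2*δ + 1) = -(2*δ) by ring]
    ring
  have hI2 : ∫ r in Set.Ioi (1/lam), r⁻¹ * φ ((r^2)⁻¹)
      ≤ C₂ * ((1/lam) ^ (-(2*δ)) / (2*δ)) := by
    rw [← hM2val]
    exact setIntegral_mono_on hf2int hM2int measurableSet_Ioi hpt2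
  ------------------------------------------------------------------ combine
  have e1 : ((lam^2:ℝ)) ^ (-δ') = lam ^ (2 * -δ') := by
    rw [← Real.rpow_two, ← Real.rpow_mul hlam.le]
  have e2 : ((lam^2:ℝ)) ^ (-δ) = lam ^ (2 * -δ) := by
    rw [← Real.rpow_two, ← Real.rpow_mul hlam.le]
  have hid1 : lam ^ 2 * (C₁ * ((1/lam) ^ (2 - 2*δ') / (2 - 2*δ')))
      = a₆ / (2 - 2*δ') * φ (lam^2) := by
    rw [hC₁, ies_rpow_one_div hlam, e1]
    have h4 : (lam:ℝ)^2 * (lam ^ (2 * -δ') * lam ^ (-(2 - 2*δ'))) = 1 := by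
      rw [← Real.rpow_two, ← Real.rpow_add hlam, ← Real.rpow_add hlam,
        show ((2:ℝ) + (2 * -δ' + -(2 - 2*δ'))) = 0 by ring, Real.rpow_zero]
    calc lam ^ 2 * (a₆ * φ (lam^2) * lam ^ (2 * -δ') * (lam ^ (-(2 - 2*δ')) / (2 - 2*δ')))
        = a₆ * φ (lam^2) / (2 - 2*δ') * (lam^2 * (lam ^ (2 * -δ') * lam ^ (-(2 - 2*δ')))) := by
          ring
      _ = a₆ * φ (lam^2) / (2 - 2*δ') := by rw [h4, mul_one]
      _ = a₆ / (2 - 2*δ') * φ (lam^2) := by ring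
  have hid2 : C₂ * ((1/lam) ^ (-(2*δ)) / (2*δ)) = 1 / (2*δ*a₅) * φ (lam^2) := by
    rw [hC₂, ies_rpow_one_div hlam, e2]
    have h3 : lam ^ (2 * -δ) * lam ^ (-(-(2*δ))) = 1 := by
      rw [← Real.rpow_add hlam, show (2 * -δ + -(-(2*δ))) = (0:ℝ) by ring, Real.rpow_zero]
    calc a₅⁻¹ * φ (lam^2) * lam ^ (2 * -δ) * (lam ^ (-(-(2*δ))) / (2*δ))
        = a₅⁻¹ * φ (lam^2) / (2*δ) * (lam ^ (2 * -δ) * lam ^ (-(-(2*δ)))) := by ring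
      _ = a₅⁻¹ * φ (lam^2) / (2*δ) := by rw [h3, mul_one]
      _ = 1 / (2*δ*a₅) * φ (lam^2) := by
          rw [one_div, mul_inv, mul_inv]
          ring
  calc lam ^ 2 * (∫ r in Set.Ioc (0:ℝ) (1 / lam), r * φ ((r ^ 2)⁻¹))
        + (∫ r in Set.Ioi (1 / lam), r⁻¹ * φ ((r ^ 2)⁻¹))
      ≤ lam ^ 2 * (C₁ * ((1/lam) ^ (2 - 2*δ') / (2 - 2*δ')))
        + C₂ * ((1/lam) ^ (-(2*δ)) / (2*δ)) := by
        exact add_le_add (mul_le_mul_of_nonneg_left hI1 hL.le) hI2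
    _ = (a₆ / (2 - 2*δ') + 1 / (2*δ*a₅)) * φ (lam^2) := by
        rw [hid1, hid2]; ring
end

section
/- Suppose φ:(0,∞)→(0,∞) is increasing and satisfies a₅(R/r)^{δ} ≤ φ(R)/φ(r) for all 0<r<R<∞ with δ∈(0,1), a₅>0. Then there exists c > 0 such that ∫₀^{1/λ} r^{−1} φ(r^{−2})^{−1} dr ≤ c φ(λ²)^{−1} for all λ > 0. -/
open MeasureTheory

/-- Karamata-type integral estimate (2.12). -/
theorem integral_estimate_inverse
    (φ : ℝ → ℝ) (a₅ δ : ℝ)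
    (ha₅ : 0 < a₅) (hδ0 : 0 < δ) (hδ1 : δ < 1)
    (hφpos : ∀ x > 0, 0 < φ x)
    (hφmono : ∀ x y : ℝ, 0 < x → x ≤ y → φ x ≤ φ y)
    (hscal : ∀ r R : ℝ, 0 < r → r < R → a₅ * (R / r) ^ δ ≤ φ R / φ r) :
    ∃ c > 0, ∀ lam > 0,
      (∫ r in Set.Ioc (0:ℝ) (1 / lam), r⁻¹ * (φ ((r ^ 2)⁻¹))⁻¹)
        ≤ c * (φ (lam ^ 2))⁻¹ := by
  refine ⟨a₅⁻¹ * (2 * δ)⁻¹, by positivity, ?_⟩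
  intro lam hlam
  have hb : (0:ℝ) ≤ 1 / lam := by positivity
  have hphilam : 0 < φ (lam ^ 2) := hφpos _ (by positivity)
  set C : ℝ := a₅⁻¹ * (φ (lam ^ 2))⁻¹ * lam ^ (2 * δ) with hC
  have hCpos : 0 < C := by positivity
  have hexp : (-1 : ℝ) < 2 * δ - 1 := by linarith
  have hint : IntegrableOn (fun r : ℝ => C * r ^ (2 * δ - 1)) (Set.Ioc 0 (1 / lam)) := by
    exact Integrable.const_mul
      ((intervalIntegrable_iff_integrableOn_Ioc_of_le hb).mp
        (intervalIntegral.intervalIntegrable_rpow' hexp)) C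
  have hnn : 0 ≤ᵐ[volume.restrict (Set.Ioc (0:ℝ) (1 / lam))]
      fun r : ℝ => r⁻¹ * (φ ((r ^ 2)⁻¹))⁻¹ := by
    filter_upwards [ae_restrict_mem measurableSet_Ioc] with r hr
    have hr0 : (0:ℝ) < r := hr.1
    have := hφpos ((r ^ 2)⁻¹) (by positivity)
    positivity
  have hle : (fun r : ℝ => r⁻¹ * (φ ((r ^ 2)⁻¹))⁻¹)
      ≤ᵐ[volume.restrict (Set.Ioc (0:ℝ) (1 / lam))]
      fun r : ℝ => C * r ^ (2 * δ - 1) := by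
    have h2 : ∀ᵐ r : ℝ ∂(volume.restrict (Set.Ioc (0:ℝ) (1 / lam))), r ≠ 1 / lam := by
      refine ae_restrict_of_ae ?_
      rw [ae_iff]
      have : {x : ℝ | ¬ x ≠ 1 / lam} = {1 / lam} := by ext x; simp
      rw [this]
      exact measure_singleton _
    filter_upwards [ae_restrict_mem measurableSet_Ioc, h2] with r hr hne
    have hr0 : (0:ℝ) < r := hr.1
    have hrlt : r < 1 / lam := lt_of_le_of_ne hr.2 hne
    have hr2 : (0:ℝ) < r ^ 2 := by positivity
    have hRpos : (0:ℝ) < (r ^ 2)⁻¹ := by positivity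
    have hφR : 0 < φ ((r ^ 2)⁻¹) := hφpos _ hRpos
    have hlr : (0:ℝ) < lam * r := by positivity
    have hlr1 : lam * r < 1 := by
      have h := (lt_div_iff₀ hlam).1 hrlt
      linarith [mul_comm lam r]
    have hR : lam ^ 2 < (r ^ 2)⁻¹ := by
      have h1 : lam ^ 2 * r ^ 2 < 1 := by nlinarith
      have h2' : r ^ 2 * (r ^ 2)⁻¹ = 1 := mul_inv_cancel₀ (ne_of_gt hr2)
      nlinarith
    have hs := hscal (lam ^ 2) ((r ^ 2)⁻¹) (by positivity) hR
    set X : ℝ := ((r ^ 2)⁻¹ / lam ^ 2) ^ δ with hXdef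
    have hXpos : 0 < X := Real.rpow_pos_of_pos (by positivity) δ
    -- key identity : X = (lam^(2δ) * r^(2δ))⁻¹
    have hXeq : X = (lam ^ (2 * δ) * r ^ (2 * δ))⁻¹ := by
      have hbase : ((r ^ 2)⁻¹ / lam ^ 2 : ℝ) = ((lam * r) ^ 2)⁻¹ := by
        field_simp
      rw [hXdef, hbase, ← Real.rpow_natCast (lam * r) 2,
        ← Real.rpow_neg hlr.le, ← Real.rpow_mul hlr.le,
        ← Real.mul_rpow hlam.le hr0.le, ← Real.rpow_neg hlr.le]
      norm_num
    -- from hs : a₅ * X ≤ φR / φλ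
    have hφRlow : a₅ * X * φ (lam ^ 2) ≤ φ ((r ^ 2)⁻¹) := by
      rw [div_eq_mul_inv] at hs
      calc a₅ * X * φ (lam ^ 2) ≤ φ ((r ^ 2)⁻¹) * (φ (lam ^ 2))⁻¹ * φ (lam ^ 2) := by
            exact mul_le_mul_of_nonneg_right hs hphilam.le
        _ = φ ((r ^ 2)⁻¹) := by field_simp
    have hinv : (φ ((r ^ 2)⁻¹))⁻¹ ≤ (a₅ * X * φ (lam ^ 2))⁻¹ :=
      inv_anti₀ (by positivity) hφRlow
    calc r⁻¹ * (φ ((r ^ 2)⁻¹))⁻¹ ≤ r⁻¹ * (a₅ * X * φ (lam ^ 2))⁻¹ := by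
          exact mul_le_mul_of_nonneg_left hinv (by positivity)
      _ = C * r ^ (2 * δ - 1) := by
          rw [hXeq, hC]
          have hrpow : r ^ (2 * δ - 1) = r ^ (2 * δ) * r⁻¹ := by
            rw [Real.rpow_sub hr0, Real.rpow_one, div_eq_mul_inv]
          rw [hrpow]
          have h1 : (0:ℝ) < lam ^ (2 * δ) := Real.rpow_pos_of_pos hlam (2 * δ)
          have h2' : (0:ℝ) < r ^ (2 * δ) := Real.rpow_pos_of_pos hr0 (2 * δ)
          field_simp
  calc (∫ r in Set.Ioc (0:ℝ) (1 / lam), r⁻¹ * (φ ((r ^ 2)⁻¹))⁻¹)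
      ≤ ∫ r in Set.Ioc (0:ℝ) (1 / lam), C * r ^ (2 * δ - 1) :=
        integral_mono_of_nonneg hnn hint hle
    _ = C * ∫ r in Set.Ioc (0:ℝ) (1 / lam), r ^ (2 * δ - 1) := by
        rw [integral_const_mul]
    _ = C * ((1 / lam) ^ (2 * δ) / (2 * δ)) := by
        congr 1
        rw [← intervalIntegral.integral_of_le hb, integral_rpow (Or.inl hexp)]
        have h0 : (0:ℝ) ^ (2 * δ - 1 + 1) = 0 := by
          rw [Real.zero_rpow (by linarith)]
        rw [h0]
        norm_num
    _ = a₅⁻¹ * (2 * δ)⁻¹ * (φ (lam ^ 2))⁻¹ := by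
        rw [hC]
        have : ((1 / lam : ℝ)) ^ (2 * δ) = (lam ^ (2 * δ))⁻¹ := by
          rw [one_div, Real.inv_rpow hlam.le]
        rw [this]
        have h1 : (0:ℝ) < lam ^ (2 * δ) := Real.rpow_pos_of_pos hlam (2 * δ)
        field_simp
end
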